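/- The set function F(Z) = log det(K_Z + σ² I_{|Z|}) defined on subsets Z of a finite ground set D (where K is positive semidefinite and σ² > 0) is submodular: for all A ⊆ B ⊆ D and x ∈ D \ B, F(A ∪ {x}) − F(A) ≥ F(B ∪ {x}) − F(B). -/

import Mathlib

open Matrix

variable {D : Type*} [Fintype D] [DecidableEq D]

/-- Principal submatrix of `K` indexed by the finite subset `Z`. -/
def gram (K : Matrix D D ℝ) (Z : Finset D) : Matrix Z Z ℝ :=
  K.submatrix (fun i => (i : D)) (fun j => (j : D))

/-- The set function `F(Z) = log det(K_Z + σ² I)`. -/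
noncomputable def logdetF (K : Matrix D D ℝ) (σ2 : ℝ) (Z : Finset D) : ℝ :=
  Real.log ((gram K Z + σ2 • 1).det)

/- ### Auxiliary lemmas -/

lemma LogDetAux.symmDot {n : Type*} [Fintype n] {M : Matrix n n ℝ} (h : Mᵀ = M) (a b : n → ℝ) :
    a ⬝ᵥ M *ᵥ b = (M *ᵥ a) ⬝ᵥ b := by
  rw [dotProduct_mulVec, ← mulVec_transpose, h]

lemma LogDetAux.herm_transpose {n : Type*} {M : Matrix n n ℝ} (h : M.IsHermitian) : Mᵀ = M := by
  ext i j
  have := congrFun (congrFun h.eq i) j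
  simpa [conjTranspose_apply] using this

/-- Completing the square: `2⟨u,w⟩ - ⟨w,Pw⟩ ≤ ⟨u,P⁻¹u⟩` for positive definite `P`. -/
lemma LogDetAux.complete_square {n : Type*} [Fintype n] [DecidableEq n] {P : Matrix n n ℝ}
    (hP : P.PosDef) (u w : n → ℝ) :
    2 * (u ⬝ᵥ w) - w ⬝ᵥ P *ᵥ w ≤ u ⬝ᵥ P⁻¹ *ᵥ u := by
  have hPt : Pᵀ = P := herm_transpose hP.isHermitian
  have hPinvt : P⁻¹ᵀ = P⁻¹ := herm_transpose hP.isHermitian.inv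
  set z := P⁻¹ *ᵥ u with hz
  have hPz : P *ᵥ z = u := by
    rw [hz, mulVec_mulVec, Matrix.mul_nonsing_inv _ hP.det_pos.ne'.isUnit, one_mulVec]
  have h0 : (0:ℝ) ≤ (w - z) ⬝ᵥ P *ᵥ (w - z) := by
    simpa using hP.posSemidef.dotProduct_mulVec_nonneg (w - z)
  have hexp : (w - z) ⬝ᵥ P *ᵥ (w - z)
      = w ⬝ᵥ P *ᵥ w - w ⬝ᵥ u - u ⬝ᵥ w + u ⬝ᵥ P⁻¹ *ᵥ u := by
    have h1 : z ⬝ᵥ P *ᵥ w = u ⬝ᵥ w := by rw [symmDot hPt, hPz]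
    have h2 : w ⬝ᵥ P *ᵥ z = w ⬝ᵥ u := by rw [hPz]
    have h3 : z ⬝ᵥ P *ᵥ z = u ⬝ᵥ P⁻¹ *ᵥ u := by
      rw [hPz, hz, symmDot hPinvt, dotProduct_comm]
    rw [mulVec_sub, dotProduct_sub, sub_dotProduct, sub_dotProduct, h1, h2, h3]
    ring
  rw [hexp] at h0
  have := dotProduct_comm u w
  linarith

/-- The choice `w = P⁻¹u` attains equality in `complete_square`. -/
lemma LogDetAux.eq_case {n : Type*} [Fintype n] [DecidableEq n] {P : Matrix n n ℝ}
    (hP : P.PosDef) (u : n → ℝ) :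
    u ⬝ᵥ P⁻¹ *ᵥ u = 2 * (u ⬝ᵥ (P⁻¹ *ᵥ u)) - (P⁻¹ *ᵥ u) ⬝ᵥ P *ᵥ (P⁻¹ *ᵥ u) := by
  have hPinvt : P⁻¹ᵀ = P⁻¹ := herm_transpose hP.isHermitian.inv
  have hPz : P *ᵥ (P⁻¹ *ᵥ u) = u := by
    rw [mulVec_mulVec, Matrix.mul_nonsing_inv _ hP.det_pos.ne'.isUnit, one_mulVec]
  rw [hPz, symmDot hPinvt, dotProduct_comm]
  ring

/-- The reindexing equivalence for `insert x Z`. -/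
def LogDetAux.insEquiv (x : D) (Z : Finset D) (hx : x ∉ Z) :
    (↥Z ⊕ Unit) ≃ ↥(insert x Z : Finset D) where
  toFun := Sum.elim (fun i => ⟨i, Finset.mem_insert_of_mem i.2⟩)
    (fun _ => ⟨x, Finset.mem_insert_self x Z⟩)
  invFun j := if h : (j : D) ∈ Z then Sum.inl ⟨j, h⟩ else Sum.inr ()
  left_inv := by rintro (i | ⟨⟩) <;> simp [hx]
  right_inv := by
    rintro ⟨j, hj⟩
    rcases Finset.mem_insert.mp hj with h | h
    · subst h; simp [hx]
    · simp [h]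

lemma LogDetAux.pd_gram {K : Matrix D D ℝ} (hK : K.PosSemidef) {σ2 : ℝ} (hσ : 0 < σ2)
    (Z : Finset D) : (gram K Z + σ2 • 1 : Matrix Z Z ℝ).PosDef := by
  refine Matrix.PosDef.posSemidef_add (hK.submatrix _) ?_
  rw [smul_one_eq_diagonal]
  exact .diagonal fun _ => hσ

/-- Schur-complement factorisation of the determinant after inserting one element. -/
lemma LogDetAux.det_factor {K : Matrix D D ℝ} (hK : K.PosSemidef) {σ2 : ℝ} (hσ : 0 < σ2)
    {Z : Finset D} {x : D} (hx : x ∉ Z) :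
    (gram K (insert x Z) + σ2 • 1).det =
      (gram K Z + σ2 • 1).det *
        ((K x x + σ2) -
          (fun i : Z => K i x) ⬝ᵥ (gram K Z + σ2 • 1)⁻¹ *ᵥ (fun i : Z => K i x)) := by
  have hKsymm : ∀ a b, K a b = K b a := by
    intro a b
    have := congrFun (congrFun hK.isHermitian.eq a) b
    simpa [conjTranspose_apply] using this.symm
  have hne : ∀ i : Z, (i : D) ≠ x := by
    intro i h
    exact hx (h ▸ i.2)
  set P : Matrix Z Z ℝ := gram K Z + σ2 • 1 with hP
  set u : Z → ℝ := fun i => K i x with hu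
  set e := insEquiv x Z hx with he
  have hblock : (gram K (insert x Z) + σ2 • 1).submatrix e e =
      fromBlocks P (Matrix.of fun i _ => u i) (Matrix.of fun _ j => u j)
        (Matrix.of fun _ _ => K x x + σ2) := by
    ext a b
    rcases a with i | ⟨⟩ <;> rcases b with j | ⟨⟩
    · simp [he, insEquiv, _root_.gram, hP, Matrix.one_apply]
    · simp [he, insEquiv, _root_.gram, hu, Matrix.one_apply, hne i]
    · simp [he, insEquiv, _root_.gram, hu, Matrix.one_apply, (hne j).symm,
        hKsymm x j]
    · simp [he, insEquiv, _root_.gram, Matrix.one_apply]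
  have hPd : P.PosDef := pd_gram hK hσ Z
  haveI : Invertible P := Matrix.invertibleOfIsUnitDet P hPd.det_pos.ne'.isUnit
  have hdet := Matrix.det_fromBlocks₁₁ (n := Unit) P (Matrix.of fun i _ => u i)
      (Matrix.of fun _ j => u j) (Matrix.of fun _ _ => K x x + σ2)
  rw [← hblock, det_submatrix_equiv_self] at hdet
  rw [hdet, invOf_eq_nonsing_inv]
  congr 1
  rw [det_unique]
  have huu : ((Matrix.of fun (_ : Unit) j => u j) * P⁻¹ *
        (Matrix.of fun i (_ : Unit) => u i)) default default
      = u ⬝ᵥ P⁻¹ *ᵥ u := by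
    simp only [mul_apply, dotProduct, mulVec, Finset.sum_mul, Finset.mul_sum, Matrix.of_apply]
    rw [Finset.sum_comm]
    apply Finset.sum_congr rfl; intro i _
    apply Finset.sum_congr rfl; intro j _
    ring
  simp only [Matrix.sub_apply, huu, Matrix.of_apply]

/-- Extending a vector by zero does not change dot products against restrictions. -/
lemma LogDetAux.dot_subset {A B : Finset D} (hAB : A ⊆ B) (f w : D → ℝ)
    (hw : ∀ j ∉ A, w j = 0) :
    (fun i : B => f i) ⬝ᵥ (fun i : B => w i) = (fun i : A => f i) ⬝ᵥ (fun i : A => w i) := by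
  simp only [dotProduct]
  rw [Finset.sum_coe_sort B (fun a => f a * w a), Finset.sum_coe_sort A (fun a => f a * w a)]
  exact (Finset.sum_subset hAB (fun j _ hj => by rw [hw j hj, mul_zero])).symm

/-- Extending a vector by zero does not change the quadratic form. -/
lemma LogDetAux.quad_subset {K : Matrix D D ℝ} {σ2 : ℝ} {A B : Finset D} (hAB : A ⊆ B)
    (w : D → ℝ) (hw : ∀ j ∉ A, w j = 0) :
    (fun i : B => w i) ⬝ᵥ (gram K B + σ2 • 1) *ᵥ (fun i : B => w i) =
      (fun i : A => w i) ⬝ᵥ (gram K A + σ2 • 1) *ᵥ (fun i : A => w i) := by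
  set m : D → D → ℝ := fun a b => K a b + σ2 * (if a = b then 1 else 0) with hm
  have hentry : ∀ (Z : Finset D) (i j : Z), (gram K Z + σ2 • 1) i j = m i j := by
    intro Z i j
    simp [hm, _root_.gram, Matrix.one_apply]
  have hform : ∀ Z : Finset D,
      (fun i : Z => w i) ⬝ᵥ (gram K Z + σ2 • 1) *ᵥ (fun i : Z => w i)
        = ∑ i ∈ Z, ∑ j ∈ Z, w i * (m i j * w j) := by
    intro Z
    have inner : ∀ a : D, (∑ j : Z, m a j * w j) = ∑ j ∈ Z, m a j * w j :=
      fun a => Finset.sum_coe_sort Z (fun b => m a b * w b)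
    have h1 : (fun i : Z => w i) ⬝ᵥ (gram K Z + σ2 • 1) *ᵥ (fun i : Z => w i)
        = ∑ i : Z, (fun a => w a * ∑ j ∈ Z, m a j * w j) ↑i := by
      simp only [dotProduct, mulVec, hentry]
      exact Finset.sum_congr rfl fun i _ => by rw [inner (i : D)]
    rw [h1, Finset.sum_coe_sort Z (fun a => w a * ∑ j ∈ Z, m a j * w j)]
    exact Finset.sum_congr rfl fun i _ => by rw [Finset.mul_sum]
  rw [hform A, hform B]
  have hin : ∀ i : D, (∑ j ∈ A, w i * (m i j * w j)) = ∑ j ∈ B, w i * (m i j * w j) :=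
    fun i => Finset.sum_subset hAB (fun j _ hj => by rw [hw j hj, mul_zero, mul_zero])
  calc (∑ i ∈ B, ∑ j ∈ B, w i * (m i j * w j))
      = ∑ i ∈ A, ∑ j ∈ B, w i * (m i j * w j) :=
        (Finset.sum_subset hAB (fun i _ hi => by
          rw [hw i hi]
          simp)).symm
    _ = ∑ i ∈ A, ∑ j ∈ A, w i * (m i j * w j) :=
        Finset.sum_congr rfl fun i _ => (hin i).symm

open LogDetAux in
/-- `F(Z) = log det(K_Z + σ²I)` is submodular: for `A ⊆ B` and `x ∉ B`,
`F(A ∪ {x}) − F(A) ≥ F(B ∪ {x}) − F(B)`. -/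
theorem logdet_submodular (K : Matrix D D ℝ) (hK : K.PosSemidef)
    (σ2 : ℝ) (hσ : 0 < σ2) (A B : Finset D) (hAB : A ⊆ B) (x : D) (hx : x ∉ B) :
    logdetF K σ2 (insert x B) - logdetF K σ2 B ≤
      logdetF K σ2 (insert x A) - logdetF K σ2 A := by
  have hxA : x ∉ A := fun h => hx (hAB h)
  set PA : Matrix A A ℝ := gram K A + σ2 • 1 with hPAdef
  set PB : Matrix B B ℝ := gram K B + σ2 • 1 with hPBdef
  have hPA : PA.PosDef := pd_gram hK hσ A
  have hPB : PB.PosDef := pd_gram hK hσ B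
  set uA : A → ℝ := fun i => K i x with huA
  set uB : B → ℝ := fun i => K i x with huB
  set qA : ℝ := uA ⬝ᵥ PA⁻¹ *ᵥ uA with hqA
  set qB : ℝ := uB ⬝ᵥ PB⁻¹ *ᵥ uB with hqB
  have hdA : (gram K (insert x A) + σ2 • 1).det = PA.det * (K x x + σ2 - qA) :=
    det_factor hK hσ hxA
  have hdB : (gram K (insert x B) + σ2 • 1).det = PB.det * (K x x + σ2 - qB) :=
    det_factor hK hσ hx
  -- the key monotonicity of the quadratic form
  have hq : qA ≤ qB := by
    set z : A → ℝ := PA⁻¹ *ᵥ uA with hz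
    set w : D → ℝ := fun j => if h : j ∈ A then z ⟨j, h⟩ else 0 with hw
    have hw0 : ∀ j ∉ A, w j = 0 := fun j hj => dif_neg hj
    have hwA : (fun i : A => w i) = z := by
      funext i
      simp [hw]
    have h1 : uA ⬝ᵥ z = uB ⬝ᵥ (fun i : B => w i) := by
      rw [← hwA]
      exact (dot_subset hAB (fun a => K a x) w hw0).symm
    have h2 : z ⬝ᵥ PA *ᵥ z = (fun i : B => w i) ⬝ᵥ PB *ᵥ (fun i : B => w i) := by
      rw [← hwA]
      exact (quad_subset hAB w hw0).symm
    calc qA = 2 * (uA ⬝ᵥ z) - z ⬝ᵥ PA *ᵥ z := eq_case hPA uA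
      _ = 2 * (uB ⬝ᵥ (fun i : B => w i))
            - (fun i : B => w i) ⬝ᵥ PB *ᵥ (fun i : B => w i) := by rw [h1, h2]
      _ ≤ qB := complete_square hPB uB _
  have hsA : 0 < K x x + σ2 - qA := by
    have h := (pd_gram hK hσ (insert x A)).det_pos
    rw [hdA] at h
    nlinarith [hPA.det_pos]
  have hsB : 0 < K x x + σ2 - qB := by
    have h := (pd_gram hK hσ (insert x B)).det_pos
    rw [hdB] at h
    nlinarith [hPB.det_pos]
  have hlog : Real.log (K x x + σ2 - qB) ≤ Real.log (K x x + σ2 - qA) :=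
    (Real.log_le_log_iff hsB hsA).mpr (by linarith)
  simp only [logdetF]
  rw [hdA, hdB, Real.log_mul hPA.det_pos.ne' hsA.ne', Real.log_mul hPB.det_pos.ne' hsB.ne']
  rw [← hPAdef, ← hPBdef]
  linarith
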